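/- arXiv:2510.13292 — 3 statements merged into one kernel-verified Lean document; each statement's English description precedes it below -/
import Mathlib

section
/- There are at most q^n/n monic irreducible polynomials of degree n in F_q[t]. -/
open Polynomial UniqueFactorizationMonoid

/-- There are at most `q^n / n` monic irreducible polynomials of degree `n`
over a finite field with `q` elements; equivalently, `n` times the number of
monic irreducible polynomials of degree `n` is at most `q^n`. -/
theorem count_monic_irreducible_le
    (F : Type*) [Field F] [Fintype F] (q n : ℕ) (hq : q = Fintype.card F)
    (hn : 0 < n) :
    ({p : Polynomial F | p.Monic ∧ Irreducible p ∧ p.natDegree = n}).Finite ∧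
      ({p : Polynomial F | p.Monic ∧ Irreducible p ∧ p.natDegree = n}).ncard * n ≤ q ^ n := by
  classical
  letI : NormalizationMonoid F :=
    { normUnit := fun a => if h : a = 0 then 1 else (Units.mk0 a h)⁻¹
      normUnit_zero := by simp
      normUnit_one := by simp
      normUnit_mul_units := by
        intro a u ha
        have hau : a * (u : F) ≠ 0 := mul_ne_zero ha u.ne_zero
        ext
        simp only [dif_neg hau, dif_neg ha, Units.val_mul, Units.val_inv_eq_inv_val,
          Units.val_mk0, mul_inv_rev] }
  subst hq
  set q := Fintype.card F with hq
  have hq1 : 1 < q := Fintype.one_lt_card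
  set g : F[X] := X ^ q ^ n - X with hgdef
  have hgne : g ≠ 0 := FiniteField.X_pow_card_pow_sub_X_ne_zero F hn.ne' hq1
  have hgdeg : g.natDegree = q ^ n := FiniteField.X_pow_card_pow_sub_X_natDegree_eq F hn.ne' hq1
  have hdvd : ∀ p : F[X], Irreducible p → p.natDegree = n → p ∣ g := by
    intro p hirr hdeg
    haveI : Fact (Irreducible p) := ⟨hirr⟩
    letI : Fintype (AdjoinRoot p) :=
      Module.fintypeOfFintype (AdjoinRoot.powerBasis hirr.ne_zero).basis
    have hcard : Fintype.card (AdjoinRoot p) = q ^ n := by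
      rw [Module.card_fintype (AdjoinRoot.powerBasis hirr.ne_zero).basis, Fintype.card_fin,
        AdjoinRoot.powerBasis_dim, hdeg]
    have hroot := FiniteField.pow_card (AdjoinRoot.root p)
    rw [hcard] at hroot
    rw [← AdjoinRoot.mk_eq_zero, hgdef, map_sub, map_pow, AdjoinRoot.mk_X, hroot, sub_self]
  set S := {p : Polynomial F | p.Monic ∧ Irreducible p ∧ p.natDegree = n} with hS
  set M := (normalizedFactors g).toFinset with hM
  have hsub : S ⊆ ↑M := by
    intro p hp
    obtain ⟨hmon, hirr, hdeg⟩ := hp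
    obtain ⟨r, hrmem, hr⟩ := exists_mem_normalizedFactors_of_dvd hgne hirr (hdvd p hirr hdeg)
    have : p = r := by
      rw [← hmon.normalize_eq_self, ← normalize_normalized_factor r hrmem]
      exact normalize_eq_normalize hr.dvd hr.symm.dvd
    rw [this]
    exact Finset.mem_coe.mpr (Multiset.mem_toFinset.mpr hrmem)
  have hfin : S.Finite := M.finite_toSet.subset hsub
  refine ⟨hfin, ?_⟩
  have hTsub : hfin.toFinset ⊆ M := by
    intro p hp
    exact hsub (hfin.mem_toFinset.mp hp)
  have h1 : S.ncard * n = ∑ p ∈ hfin.toFinset, p.natDegree := by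
    rw [Finset.sum_congr rfl (fun p hp => ((hfin.mem_toFinset.mp hp).2.2 : p.natDegree = n)),
      Finset.sum_const, smul_eq_mul, Set.ncard_eq_toFinset_card _ hfin]
  have h2 : ∑ p ∈ hfin.toFinset, p.natDegree ≤ ∑ p ∈ M, p.natDegree :=
    Finset.sum_le_sum_of_subset hTsub
  have h3 : ∑ p ∈ M, p.natDegree ≤ ((normalizedFactors g).map natDegree).sum := by
    obtain ⟨u, hu⟩ := Multiset.le_iff_exists_add.mp
      (Multiset.map_le_map ((normalizedFactors g).dedup_le))
    rw [Finset.sum, hu, Multiset.sum_add]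
    exact Nat.le_add_right _ _
  have h4 : ((normalizedFactors g).map natDegree).sum = ((normalizedFactors g).prod).natDegree := by
    rw [natDegree_multiset_prod]
    exact zero_notMem_normalizedFactors g
  have h5 : ((normalizedFactors g).prod).natDegree = g.natDegree := by
    have hassoc := prod_normalizedFactors hgne
    have hprodne : (normalizedFactors g).prod ≠ 0 := fun h =>
      hgne ((associated_zero_iff_eq_zero g).mp (h ▸ hassoc).symm)
    exact Nat.le_antisymm (natDegree_le_of_dvd hassoc.dvd hgne)
      (natDegree_le_of_dvd hassoc.symm.dvd hprodne)
  omega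
end

section
/- If F ∈ F_q[t] is a squarefree polynomial of degree d ≥ 2, then the number of monic irreducible factors of F is at most 4·q·d/(log_q(d)+1), and in particular at most 4·q·d/log_q(d). -/
open Real Polynomial Finset UniqueFactorizationMonoid

lemma irred_dvd_X_pow_card_pow_sub_X (K : Type*) [Field K] [Fintype K] (p : K[X])
    (hp : Irreducible p) :
    p ∣ X ^ (Fintype.card K) ^ p.natDegree - X := by
  haveI := Fact.mk hp
  have hp0 : p ≠ 0 := hp.ne_zero
  let pb := AdjoinRoot.powerBasis hp0
  haveI : Fintype (AdjoinRoot p) := Module.fintypeOfFintype pb.basis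
  have hcard : Fintype.card (AdjoinRoot p) = Fintype.card K ^ p.natDegree := by
    rw [Module.card_fintype pb.basis, Fintype.card_fin, AdjoinRoot.powerBasis_dim]
  rw [← AdjoinRoot.mk_eq_zero]
  have : (AdjoinRoot.root p) ^ (Fintype.card K) ^ p.natDegree = AdjoinRoot.root p := by
    rw [← hcard]; exact FiniteField.pow_card _
  simp [map_sub, map_pow, this]

lemma sum_natDegree_le {K : Type*} [Field K] (g : K[X]) (hg : g ≠ 0) (T : Finset K[X])
    (hT : ∀ p ∈ T, p.Monic ∧ Irreducible p ∧ p ∣ g) :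
    ∑ p ∈ T, p.natDegree ≤ g.natDegree := by
  classical
  have hsub : T ⊆ (normalizedFactors g).toFinset := by
    intro p hp
    obtain ⟨hm, hirr, hdvd⟩ := hT p hp
    obtain ⟨r, hr, hassoc⟩ := exists_mem_normalizedFactors_of_dvd hg hirr hdvd
    have hr0 : r ≠ 0 := fun h => zero_notMem_normalizedFactors g (h ▸ hr)
    have hrm : r.Monic := by
      have := normalize_normalized_factor r hr
      rw [← this]; exact monic_normalize hr0
    rw [Multiset.mem_toFinset]
    rwa [eq_of_monic_of_associated hm hrm hassoc]
  have h0 : (0 : K[X]) ∉ normalizedFactors g := zero_notMem_normalizedFactors g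
  calc ∑ p ∈ T, p.natDegree
      ≤ ∑ p ∈ (normalizedFactors g).toFinset, p.natDegree :=
        Finset.sum_le_sum_of_subset hsub
    _ ≤ ((normalizedFactors g).map natDegree).sum := by
        rw [Finset.sum_multiset_map_count]
        refine Finset.sum_le_sum fun a ha => ?_
        have h1 : 1 ≤ (normalizedFactors g).count a := by
          rw [Nat.one_le_iff_ne_zero, ← Nat.pos_iff_ne_zero, Multiset.count_pos]
          exact Multiset.mem_toFinset.mp ha
        calc a.natDegree = 1 * a.natDegree := (one_mul _).symm
          _ ≤ (normalizedFactors g).count a • a.natDegree := by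
              simpa [smul_eq_mul] using Nat.mul_le_mul_right a.natDegree h1
    _ = (normalizedFactors g).prod.natDegree := (natDegree_multiset_prod _ h0).symm
    _ ≤ g.natDegree := natDegree_le_of_dvd (prod_normalizedFactors hg).dvd hg

lemma bracket_key (Q : ℝ) (hQ : 2 ≤ Q) (hQnat : ∃ n : ℕ, (n:ℝ) = Q) (k : ℕ) :
    0 ≤ Q^k * (Q^2*(3*k+5) - Q*(6*k+16) + (2*k+6)) + (k+3)*Q := by
  obtain ⟨n, rfl⟩ := hQnat
  rcases eq_or_lt_of_le hQ with h2 | h3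
  · rw [← h2]
    rcases le_or_gt 3 k with hk | hk
    · have h1 : (0:ℝ) ≤ (2:ℝ)^k := by positivity
      have h2' : (0:ℝ) ≤ 2*k - 6 := by
        have : (3:ℝ) ≤ k := by exact_mod_cast hk
        linarith
      nlinarith [mul_nonneg h1 h2']
    · interval_cases k <;> norm_num
  · have h3' : (3:ℝ) ≤ (n:ℝ) := by
      have : (2:ℕ) < n := by exact_mod_cast h3
      exact_mod_cast this
    have hk0 : (0:ℝ) ≤ (k:ℝ) := Nat.cast_nonneg k
    have hbr : 0 ≤ (n:ℝ)^2*(3*k+5) - (n:ℝ)*(6*k+16) + (2*k+6) := by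
      nlinarith [sq_nonneg ((n:ℝ) - 3), mul_nonneg hk0 (by linarith : (0:ℝ) ≤ (n:ℝ) - 3)]
    have hp : (0:ℝ) ≤ (n:ℝ)^k := by positivity
    nlinarith [mul_nonneg hp hbr]

lemma claimA (q : ℕ) (hq : 2 ≤ q) (k : ℕ) :
    ((k:ℝ)+2) * (q + ∑ e ∈ Finset.Icc 2 (k+1), ((q:ℝ)^e - q)/e) ≤ (4*q - 2) * (q:ℝ)^k := by
  have hQ : (2:ℝ) ≤ (q:ℝ) := by exact_mod_cast hq
  induction k with
  | zero =>
    rw [show Finset.Icc 2 (0+1) = ∅ by rfl]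
    simp
    linarith
  | succ k IH =>
    have hins : Finset.Icc 2 (k+1+1) = insert (k+2) (Finset.Icc 2 (k+1)) := by
      ext x; simp [Finset.mem_Icc, Finset.mem_insert]; omega
    rw [hins, Finset.sum_insert (by simp [Finset.mem_Icc])]
    set S := ∑ e ∈ Finset.Icc 2 (k+1), ((q:ℝ)^e - q)/e with hS
    set Q := (q:ℝ) with hQdef
    have hk2 : (0:ℝ) < (k:ℝ)+2 := by positivity
    have hbr := bracket_key Q hQ ⟨q, rfl⟩ k
    have key : ((k:ℝ)+3) * ((4*Q-2) * Q^k + (Q^k*Q*Q - Q)) ≤ ((k:ℝ)+2) * ((4*Q-2) * (Q^k*Q)) := by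
      nlinarith [hbr]
    have hIH : ((k:ℝ)+2) * (Q + S) ≤ (4*Q - 2) * Q^k := IH
    have hpow2 : Q^(k+2) = Q^k*Q*Q := by ring
    have hpow1 : Q^(k+1) = Q^k*Q := by ring
    push_cast
    rw [hpow2, hpow1]
    have expand : ((k:ℝ)+1+2) * (Q + ((Q^k*Q*Q - Q)/((k:ℝ)+2) + S)) * ((k:ℝ)+2)
        = ((k:ℝ)+3) * (((k:ℝ)+2)*(Q+S) + (Q^k*Q*Q - Q)) := by
      field_simp
      ring
    have step : ((k:ℝ)+3) * (((k:ℝ)+2)*(Q+S) + (Q^k*Q*Q - Q)) ≤ ((k:ℝ)+2) * ((4*Q-2) * (Q^k*Q)) := by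
      have h1 : ((k:ℝ)+3) * (((k:ℝ)+2)*(Q+S)) ≤ ((k:ℝ)+3) * ((4*Q-2) * Q^k) := by
        have : (0:ℝ) ≤ (k:ℝ)+3 := by positivity
        exact mul_le_mul_of_nonneg_left hIH this
      nlinarith [key, h1]
    calc ((k:ℝ)+1+2) * (Q + ((Q^k*Q*Q - Q)/((k:ℝ)+2) + S))
        = ((k:ℝ)+3) * (((k:ℝ)+2)*(Q+S) + (Q^k*Q*Q - Q)) / ((k:ℝ)+2) := by
          rw [← expand]; field_simp
      _ ≤ (4*Q-2) * (Q^k*Q) := by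
          rw [div_le_iff₀ hk2]
          calc ((k:ℝ)+3) * (((k:ℝ)+2)*(Q+S) + (Q^k*Q*Q - Q))
              ≤ ((k:ℝ)+2) * ((4*Q-2) * (Q^k*Q)) := step
            _ = (4*Q-2) * (Q^k*Q) * ((k:ℝ)+2) := by ring
/-- If `F` is a squarefree polynomial of degree `d ≥ 2` over a finite field with
`q` elements, then the number of its distinct monic irreducible factors is at most
`4·q·d/(log_q(d)+1)`, and in particular at most `4·q·d/log_q(d)`. -/
theorem count_irreducible_factors_le
    (K : Type*) [Field K] [Fintype K] (q : ℕ) (hq : q = Fintype.card K)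
    (f : Polynomial K) (hf : Squarefree f) (d : ℕ) (hd : d = f.natDegree)
    (hd2 : 2 ≤ d) :
    ({p : Polynomial K | p.Monic ∧ Irreducible p ∧ p ∣ f}).Finite ∧
      (({p : Polynomial K | p.Monic ∧ Irreducible p ∧ p ∣ f}).ncard : ℝ) ≤
        4 * q * d / (Real.logb q d + 1) ∧
      (({p : Polynomial K | p.Monic ∧ Irreducible p ∧ p ∣ f}).ncard : ℝ) ≤
        4 * q * d / Real.logb q d := by
  classical
  have hf0 : f ≠ 0 := hf.ne_zero
  have hq2 : 2 ≤ q := by rw [hq]; exact Fintype.one_lt_card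
  set N : Finset (Polynomial K) := (normalizedFactors f).toFinset with hN
  have hSet : {p : Polynomial K | p.Monic ∧ Irreducible p ∧ p ∣ f} = ↑N := by
    ext p
    simp only [Set.mem_setOf_eq, Finset.coe_sort_coe, Finset.mem_coe, hN,
      Multiset.mem_toFinset]
    constructor
    · rintro ⟨hm, hirr, hdvd⟩
      obtain ⟨r, hr, hassoc⟩ := exists_mem_normalizedFactors_of_dvd hf0 hirr hdvd
      have hr0 : r ≠ 0 := fun h => zero_notMem_normalizedFactors f (h ▸ hr)
      have hrm : r.Monic := by
        have := normalize_normalized_factor r hr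
        rw [← this]; exact monic_normalize hr0
      rwa [eq_of_monic_of_associated hm hrm hassoc]
    · intro hp
      have hp0 : p ≠ 0 := fun h => zero_notMem_normalizedFactors f (h ▸ hp)
      have hm : p.Monic := by
        have := normalize_normalized_factor p hp
        rw [← this]; exact monic_normalize hp0
      exact ⟨hm, irreducible_of_normalized_factor p hp,
        dvd_of_mem_normalizedFactors hp⟩
  have hNprop : ∀ p ∈ N, p.Monic ∧ Irreducible p ∧ p ∣ f := by
    intro p hp
    have : p ∈ ({p : Polynomial K | p.Monic ∧ Irreducible p ∧ p ∣ f}) := by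
      rw [hSet]; exact hp
    exact this
  -- basic numbers
  have hq1 : 1 < q := hq2
  set k : ℕ := Nat.log q d with hk
  set m : ℕ := k + 1 with hm
  have hd0 : d ≠ 0 := by omega
  have hqk : q ^ k ≤ d := Nat.pow_log_le_self q hd0
  have hdm : d < q ^ m := Nat.lt_pow_succ_log_self hq1 d
  -- split N
  set A := N.filter (fun p => p.natDegree ≤ m) with hA
  set B := N.filter (fun p => ¬ p.natDegree ≤ m) with hB
  have hcardN : N.card = A.card + B.card :=
    (Finset.card_filter_add_card_filter_not _).symm
  -- bound on B
  have hBsum : B.card * (m+1) ≤ d := by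
    have h1 : B.card • (m+1) ≤ ∑ p ∈ B, p.natDegree := by
      refine Finset.card_nsmul_le_sum B _ _ ?_
      intro p hp
      rw [hB, Finset.mem_filter] at hp
      omega
    have h2 : ∑ p ∈ B, p.natDegree ≤ f.natDegree := by
      refine sum_natDegree_le f hf0 B ?_
      intro p hp
      exact hNprop p (Finset.filter_subset _ _ hp)
    rw [smul_eq_mul] at h1
    omega
  -- fiber counts
  set a : ℕ → ℕ := fun e => (N.filter (fun p => p.natDegree = e)).card with ha
  have hAcard : A.card ≤ ∑ e ∈ Finset.Icc 1 m, a e := by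
    have h1 : A.card = ∑ e ∈ Finset.Icc 1 m, (A.filter (fun p => p.natDegree = e)).card := by
      refine Finset.card_eq_sum_card_fiberwise ?_
      intro p hp
      rw [hA, Finset.mem_coe, Finset.mem_filter] at hp
      have := (hNprop p hp.1).2.1.natDegree_pos
      rw [Finset.mem_coe, Finset.mem_Icc]
      omega
    rw [h1]
    refine Finset.sum_le_sum fun e _ => ?_
    refine Finset.card_le_card ?_
    intro p hp
    simp only [hA, Finset.mem_filter, Finset.filter_filter] at hp ⊢
    tauto
  -- degree 1 count
  have ha1 : a 1 ≤ q := by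
    rw [hq]
    have : (N.filter (fun p => p.natDegree = 1)).card ≤ (Finset.univ : Finset K).card := by
      refine Finset.card_le_card_of_injOn (fun p => -p.coeff 0) (fun _ _ => Finset.mem_univ _) ?_
      intro p hp p' hp' hcoeff
      rw [Finset.mem_coe, Finset.mem_filter] at hp hp'
      have hpm : p.Monic := (hNprop p hp.1).1
      have hpm' : p'.Monic := (hNprop p' hp'.1).1
      rw [hpm.eq_X_add_C hp.2, hpm'.eq_X_add_C hp'.2]
      simp only [neg_inj] at hcoeff
      rw [hcoeff]
    simpa using this
  -- degree e count, e ≥ 2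
  have hae : ∀ e, 2 ≤ e → e * a e + q ≤ q ^ e := by
    intro e he
    have he0 : e ≠ 0 := by omega
    set g : Polynomial K := X ^ q ^ e - X with hg
    have hgdeg : g.natDegree = q ^ e := by
      rw [hg]
      exact FiniteField.X_pow_card_pow_sub_X_natDegree_eq K he0 hq1
    have hg0 : g ≠ 0 := by
      rw [hg]
      exact FiniteField.X_pow_card_pow_sub_X_ne_zero K he0 hq1
    set lin : Finset (Polynomial K) := Finset.univ.image (fun c : K => X - C c) with hlin
    have hlinj : Function.Injective (fun c : K => (X - C c : Polynomial K)) := by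
      intro c c' hcc
      simp only [sub_right_inj] at hcc
      exact C_injective hcc
    have hlincard : lin.card = q := by
      rw [hlin, Finset.card_image_of_injective _ hlinj, Finset.card_univ, hq]
    set T : Finset (Polynomial K) := (N.filter (fun p => p.natDegree = e)) ∪ lin with hT
    have hTprop : ∀ p ∈ T, p.Monic ∧ Irreducible p ∧ p ∣ g := by
      intro p hp
      rw [hT, Finset.mem_union] at hp
      rcases hp with hp | hp
      · rw [Finset.mem_filter] at hp
        obtain ⟨hmem, hdeg⟩ := hp
        obtain ⟨hmon, hirr, _⟩ := hNprop p hmem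
        refine ⟨hmon, hirr, ?_⟩
        have := irred_dvd_X_pow_card_pow_sub_X K p hirr
        rw [hdeg, ← hq] at this
        exact this
      · rw [hlin, Finset.mem_image] at hp
        obtain ⟨c, _, rfl⟩ := hp
        refine ⟨monic_X_sub_C c, irreducible_X_sub_C c, ?_⟩
        rw [dvd_iff_isRoot]
        have hc : c ^ q ^ e = c := by
          rw [hq]; exact FiniteField.pow_card_pow e c
        simp [hg, IsRoot, hc]
    have hsum := sum_natDegree_le g hg0 T hTprop
    have hdisj : Disjoint (N.filter (fun p => p.natDegree = e)) lin := by
      rw [Finset.disjoint_left]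
      intro p hp1 hp2
      rw [Finset.mem_filter] at hp1
      rw [hlin, Finset.mem_image] at hp2
      obtain ⟨c, _, rfl⟩ := hp2
      rw [natDegree_X_sub_C] at hp1
      omega
    rw [hT, Finset.sum_union hdisj] at hsum
    have h1 : ∑ p ∈ N.filter (fun p => p.natDegree = e), p.natDegree = a e * e := by
      rw [Finset.sum_congr rfl (fun p hp => (Finset.mem_filter.mp hp).2), Finset.sum_const,
        smul_eq_mul]
    have h2 : ∑ p ∈ lin, p.natDegree = q := by
      rw [hlin, Finset.sum_image (fun c _ c' _ h => hlinj h)]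
      simp [natDegree_X_sub_C, hq]
    rw [h1, h2, hgdeg] at hsum
    have : a e * e = e * a e := Nat.mul_comm _ _
    omega
  -- real arithmetic
  have hAr : (A.card:ℝ) ≤ (q:ℝ) + ∑ e ∈ Finset.Icc 2 m, ((q:ℝ)^e - q)/e := by
    have hsplit : Finset.Icc 1 m = insert 1 (Finset.Icc 2 m) := by
      ext x; simp only [Finset.mem_Icc, Finset.mem_insert]; omega
    have h2 : (A.card:ℝ) ≤ ∑ e ∈ Finset.Icc 1 m, (a e : ℝ) := by
      exact_mod_cast hAcard
    rw [hsplit, Finset.sum_insert (by simp)] at h2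
    refine h2.trans (add_le_add ?_ ?_)
    · exact_mod_cast ha1
    · refine Finset.sum_le_sum fun e hemem => ?_
      have he2 : 2 ≤ e := (Finset.mem_Icc.mp hemem).1
      have hepos : (0:ℝ) < e := by
        have : 0 < e := by omega
        exact_mod_cast this
      rw [le_div_iff₀ hepos]
      have hnat := hae e he2
      have hreal : (e:ℝ) * a e + q ≤ (q:ℝ)^e := by exact_mod_cast hnat
      linarith
  have hclaim := claimA q hq2 k
  have hqkR : ((q:ℝ))^k ≤ (d:ℝ) := by exact_mod_cast hqk
  have hq2R : (2:ℝ) ≤ (q:ℝ) := by exact_mod_cast hq2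
  have hd0R : (0:ℝ) ≤ (d:ℝ) := by positivity
  have hmain : (N.card:ℝ) * ((m:ℝ)+1) ≤ 4*(q:ℝ)*(d:ℝ) := by
    have hBr : (B.card:ℝ) * ((m:ℝ)+1) ≤ (d:ℝ) := by exact_mod_cast hBsum
    have hm1 : ((m:ℝ)+1) = (k:ℝ)+2 := by rw [hm]; push_cast; ring
    have hAr2 : (A.card:ℝ) * ((m:ℝ)+1) ≤ (4*(q:ℝ)-2)*(d:ℝ) := by
      have hpos : (0:ℝ) ≤ (k:ℝ)+2 := by positivity
      have h3 : ((k:ℝ)+2) * (A.card:ℝ)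
          ≤ ((k:ℝ)+2) * ((q:ℝ) + ∑ e ∈ Finset.Icc 2 m, ((q:ℝ)^e - q)/e) :=
        mul_le_mul_of_nonneg_left hAr hpos
      have h4 : ((k:ℝ)+2) * ((q:ℝ) + ∑ e ∈ Finset.Icc 2 m, ((q:ℝ)^e - q)/e)
          ≤ (4*(q:ℝ) - 2) * (q:ℝ)^k := by
        rw [hm]; exact hclaim
      have h5 : (4*(q:ℝ) - 2) * (q:ℝ)^k ≤ (4*(q:ℝ) - 2) * (d:ℝ) :=
        mul_le_mul_of_nonneg_left hqkR (by linarith)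
      calc (A.card:ℝ) * ((m:ℝ)+1) = ((k:ℝ)+2) * (A.card:ℝ) := by rw [hm1]; ring
        _ ≤ (4*(q:ℝ) - 2) * (d:ℝ) := h3.trans (h4.trans h5)
    have hcast : (N.card:ℝ) = (A.card:ℝ) + (B.card:ℝ) := by exact_mod_cast hcardN
    calc (N.card:ℝ) * ((m:ℝ)+1) = (A.card:ℝ) * ((m:ℝ)+1) + (B.card:ℝ) * ((m:ℝ)+1) := by
          rw [hcast]; ring
      _ ≤ (4*(q:ℝ)-2)*(d:ℝ) + (d:ℝ) := add_le_add hAr2 hBr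
      _ ≤ 4*(q:ℝ)*(d:ℝ) := by nlinarith
  -- logb facts
  have hQ1 : (1:ℝ) < (q:ℝ) := by exact_mod_cast hq1
  have hd1R : (1:ℝ) < (d:ℝ) := by exact_mod_cast (by omega : 1 < d)
  have hL0 : 0 < Real.logb q d := Real.logb_pos hQ1 hd1R
  have hLm : Real.logb q d ≤ (m:ℝ) := by
    have hdlt : (d:ℝ) ≤ (q:ℝ)^m := by exact_mod_cast hdm.le
    calc Real.logb q d ≤ Real.logb q ((q:ℝ)^m) :=
          Real.logb_le_logb_of_le hQ1 (by linarith) hdlt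
      _ = (m:ℝ) := by rw [Real.logb_pow, Real.logb_self_eq_one hQ1, mul_one]
  have hNc : (0:ℝ) ≤ (N.card:ℝ) := Nat.cast_nonneg _
  rw [hSet]
  refine ⟨N.finite_toSet, ?_, ?_⟩
  · rw [Set.ncard_coe_finset, le_div_iff₀ (by linarith : (0:ℝ) < Real.logb q d + 1)]
    calc (N.card:ℝ) * (Real.logb q d + 1) ≤ (N.card:ℝ) * ((m:ℝ)+1) :=
          mul_le_mul_of_nonneg_left (by linarith) hNc
      _ ≤ 4*(q:ℝ)*(d:ℝ) := hmain
  · rw [Set.ncard_coe_finset, le_div_iff₀ hL0]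
    calc (N.card:ℝ) * Real.logb q d ≤ (N.card:ℝ) * ((m:ℝ)+1) :=
          mul_le_mul_of_nonneg_left (by linarith) hNc
      _ ≤ 4*(q:ℝ)*(d:ℝ) := hmain
end

section
/- Let K be a field of characteristic ≠ 2, f ∈ K[X] monic separable of odd degree d ≥ 3, A = K[X]/(f), x the image of X, and N : A → K the norm map. Suppose (x₀, y₀) ∈ K² satisfies y₀² = f(x₀), and x₁ ∈ K is such that x₁ - x = (x₀ - x)·φ² for some unit φ ∈ A^×. Then y₁ := y₀·N(φ) satisfies y₁² = f(x₁), i.e., (x₁, y₁) is again a point of the curve y² = f(x). -/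
open Polynomial

lemma norm_algebraMap_sub_root {K : Type*} [Field K] {f : K[X]} (hf : f.Monic)
    (hdeg : f.natDegree ≠ 0) (c : K) :
    Algebra.norm K (algebraMap K (AdjoinRoot f) c - AdjoinRoot.root f) = f.eval c := by
  have hf0 : f ≠ 0 := hf.ne_zero
  have : Fact (0 < f.natDegree) := ⟨Nat.pos_of_ne_zero hdeg⟩
  let pb := AdjoinRoot.powerBasis hf0
  have hgen : pb.gen = AdjoinRoot.root f := rfl
  have hmin : minpoly K pb.gen = f := by
    rw [hgen, AdjoinRoot.minpoly_root hf0, hf.leadingCoeff, inv_one, map_one, mul_one]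
  -- charpoly of left multiplication by root equals f
  have hchar : (Algebra.leftMulMatrix pb.basis pb.gen).charpoly = f := by
    rw [charpoly_leftMulMatrix, hmin]
  have key : Algebra.norm K (algebraMap K (AdjoinRoot f) c - AdjoinRoot.root f)
      = ((Algebra.leftMulMatrix pb.basis pb.gen).charpoly).eval c := by
    rw [Matrix.charpoly, eval_det, Matrix.matPolyEquiv_charmatrix]
    rw [Algebra.norm_eq_matrix_det pb.basis, ← hgen]
    congr 1
    rw [map_sub]
    simp only [Polynomial.eval_sub, Polynomial.eval_X, Polynomial.eval_C]
    congr 1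
    · rw [AlgHom.commutes (Algebra.leftMulMatrix pb.basis) c,
        Matrix.algebraMap_eq_diagonal]
      rfl
  rw [key, hchar]

/-- Let `K` be a field of characteristic `≠ 2`, `f ∈ K[X]` monic separable of
odd degree `d ≥ 3`, `A = K[X]/(f)`, `x` the image of `X`, and `N : A → K` the
norm map. If `y₀² = f(x₀)` and `x₁ - x = (x₀ - x)·φ²` for a unit `φ ∈ Aˣ`,
then `y₁ := y₀ · N(φ)` satisfies `y₁² = f(x₁)`. -/
theorem point_from_same_descent_class
    (K : Type*) [Field K] (hchar : ringChar K ≠ 2)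
    (f : Polynomial K) (hf : f.Monic) (hsep : f.Separable)
    (hodd : Odd f.natDegree) (hd : 3 ≤ f.natDegree)
    (x₀ y₀ x₁ : K) (hP : y₀ ^ 2 = f.eval x₀)
    (φ : (AdjoinRoot f)ˣ)
    (hφ : algebraMap K (AdjoinRoot f) x₁ - AdjoinRoot.root f =
      (algebraMap K (AdjoinRoot f) x₀ - AdjoinRoot.root f) * (φ : AdjoinRoot f) ^ 2) :
    (y₀ * Algebra.norm K (φ : AdjoinRoot f)) ^ 2 = f.eval x₁ := by
  have hdeg : f.natDegree ≠ 0 := by omega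
  have h1 := norm_algebraMap_sub_root hf hdeg x₁
  have h0 := norm_algebraMap_sub_root hf hdeg x₀
  have := congrArg (Algebra.norm K) hφ
  rw [map_mul, map_pow, h1, h0] at this
  rw [this, ← hP]; ring
end
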